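/- Suppose every P ∈ 𝒫 is absolutely continuous with respect to a probability measure μ, and let f be a measurable [0,∞]-valued function such that f ≥ dP/dμ holds μ-almost everywhere for every P ∈ 𝒫. Then f ≥ dP/dμ holds μ-almost everywhere for every P ∈ 𝒫_eff (all elements of which are absolutely continuous with respect to μ). -/
import Mathlib


open MeasureTheory ENNReal Filter Set

variable {Ω : Type*} [MeasurableSpace Ω]

/-- `X` is an e-variable for the null hypothesis `Pfam`. -/
def IsEVar (Pfam : Set (Measure Ω)) (X : Ω → ℝ≥0∞) : Prop :=
  Measurable X ∧ ∀ P ∈ Pfam, ∫⁻ ω, X ω ∂P ≤ 1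

/-- The effective null hypothesis. -/
def Peff (Pfam : Set (Measure Ω)) : Set (Measure Ω) :=
  {P | IsFiniteMeasure P ∧ ∀ X, IsEVar Pfam X → ∫⁻ ω, X ω ∂P ≤ 1}

-- the key e-variable: indicator of S scaled by (μ S)⁻¹ * f⁻¹
lemma evar_aux (Pfam : Set (Measure Ω)) (hprob : ∀ P ∈ Pfam, IsProbabilityMeasure P)
    (μ : Measure Ω) [IsProbabilityMeasure μ] (hac : ∀ P ∈ Pfam, P ≪ μ)
    (f : Ω → ℝ≥0∞) (hf : Measurable f)
    (hdom : ∀ P ∈ Pfam, ∀ᵐ ω ∂μ, P.rnDeriv μ ω ≤ f ω)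
    {S : Set Ω} (hS : MeasurableSet S) :
    IsEVar Pfam (S.indicator (fun ω => (μ S)⁻¹ * (f ω)⁻¹)) := by
  constructor
  · exact (Measurable.const_mul hf.inv _).indicator hS
  · intro Q hQ
    haveI := hprob Q hQ
    have hmeas : AEMeasurable (S.indicator (fun ω => (μ S)⁻¹ * (f ω)⁻¹)) μ :=
      ((Measurable.const_mul hf.inv _).indicator hS).aemeasurable
    rw [← lintegral_rnDeriv_mul (hac Q hQ) hmeas]
    have hle : ∀ᵐ ω ∂μ, Q.rnDeriv μ ω * S.indicator (fun ω => (μ S)⁻¹ * (f ω)⁻¹) ω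
        ≤ S.indicator (fun _ => (μ S)⁻¹) ω := by
      filter_upwards [hdom Q hQ] with ω hω
      by_cases hωS : ω ∈ S
      · simp only [indicator_of_mem hωS]
        calc Q.rnDeriv μ ω * ((μ S)⁻¹ * (f ω)⁻¹)
            ≤ f ω * ((μ S)⁻¹ * (f ω)⁻¹) := by gcongr
          _ = (f ω * (f ω)⁻¹) * (μ S)⁻¹ := by ring
          _ ≤ 1 * (μ S)⁻¹ := by gcongr; exact ENNReal.mul_inv_le_one _
          _ = (μ S)⁻¹ := one_mul _
      · simp [indicator_of_notMem hωS]
    calc ∫⁻ ω, Q.rnDeriv μ ω * S.indicator (fun ω => (μ S)⁻¹ * (f ω)⁻¹) ω ∂μ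
        ≤ ∫⁻ ω, S.indicator (fun _ => (μ S)⁻¹) ω ∂μ := lintegral_mono_ae hle
      _ = (μ S)⁻¹ * μ S := by rw [lintegral_indicator hS _]; simp [setLIntegral_const]
      _ ≤ 1 := ENNReal.inv_mul_le_one _


/-- If `f` dominates (μ-a.e.) the `μ`-density of every element of `Pfam`, then it
also dominates the `μ`-density of every element of the effective null, all of
whose elements are absolutely continuous with respect to `μ`. -/
theorem dominating_function_peff (Pfam : Set (Measure Ω)) (hne : Pfam.Nonempty)
    (hprob : ∀ P ∈ Pfam, IsProbabilityMeasure P)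
    (μ : Measure Ω) [IsProbabilityMeasure μ] (hac : ∀ P ∈ Pfam, P ≪ μ)
    (f : Ω → ℝ≥0∞) (hf : Measurable f)
    (hdom : ∀ P ∈ Pfam, ∀ᵐ ω ∂μ, P.rnDeriv μ ω ≤ f ω) :
    (∀ P ∈ Peff Pfam, P ≪ μ) ∧
    ∀ P ∈ Peff Pfam, ∀ᵐ ω ∂μ, P.rnDeriv μ ω ≤ f ω := by
  have habs : ∀ P ∈ Peff Pfam, P ≪ μ := by
    intro P hP
    obtain ⟨hPfin, hPle⟩ := hP
    refine Measure.AbsolutelyContinuous.mk fun A hA hA0 => ?_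
    have hEV : IsEVar Pfam (A.indicator (fun _ => (⊤ : ℝ≥0∞))) := by
      refine ⟨measurable_const.indicator hA, fun Q hQ => ?_⟩
      rw [lintegral_indicator hA _, setLIntegral_const, hac Q hQ hA0, mul_zero]
      exact zero_le_one
    have := hPle _ hEV
    rw [lintegral_indicator hA _, setLIntegral_const] at this
    by_contra hPA
    rw [ENNReal.top_mul hPA] at this
    exact absurd this (by simp)
  refine ⟨habs, fun P hP => ?_⟩
  obtain ⟨hPfin, hPle⟩ := hP
  haveI := hPfin
  have hPμ : P ≪ μ := habs P ⟨hPfin, hPle⟩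
  set r := P.rnDeriv μ with hr
  have hrm : Measurable r := Measure.measurable_rnDeriv P μ
  -- the exceptional sets
  set B : ℕ → Set Ω := fun n =>
    {ω | f ω ≤ n + 1 ∧ f ω + ((n : ℝ≥0∞) + 1)⁻¹ ≤ r ω} with hB
  have hBmeas : ∀ n, MeasurableSet (B n) := by
    intro n
    have h1 : MeasurableSet {ω | f ω ≤ (n : ℝ≥0∞) + 1} := hf measurableSet_Iic
    have h2 : MeasurableSet {ω | f ω + ((n : ℝ≥0∞) + 1)⁻¹ ≤ r ω} :=
      measurableSet_le (hf.add measurable_const) hrm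
    exact h1.inter h2
  have hB0 : ∀ n, μ (B n) = 0 := by
    intro n
    by_contra h0
    set c : ℝ≥0∞ := 1 + ((n : ℝ≥0∞) + 1)⁻¹ * ((n : ℝ≥0∞) + 1)⁻¹ with hc
    -- on B n, r * f⁻¹ ≥ c
    have hlow : ∀ ω ∈ B n, c ≤ r ω * (f ω)⁻¹ := by
      rintro ω ⟨hω1, hω2⟩
      rcases eq_or_ne (f ω) 0 with h0f | h0f
      · have : (0:ℝ≥0∞) < r ω := lt_of_lt_of_le (by simp [h0f]) hω2
        rw [h0f, ENNReal.inv_zero, ENNReal.mul_top this.ne']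
        exact le_top
      · have hfne : f ω ≠ ⊤ := by
          refine ne_top_of_le_ne_top ?_ hω1
          simp [ENNReal.add_ne_top, ENNReal.natCast_ne_top]
        have hinv : ((n : ℝ≥0∞) + 1)⁻¹ ≤ (f ω)⁻¹ := by
          exact ENNReal.inv_le_inv.mpr hω1
        calc c = 1 + ((n : ℝ≥0∞) + 1)⁻¹ * ((n : ℝ≥0∞) + 1)⁻¹ := hc
          _ ≤ f ω * (f ω)⁻¹ + ((n : ℝ≥0∞) + 1)⁻¹ * (f ω)⁻¹ := by
              gcongr
              · rw [ENNReal.mul_inv_cancel h0f hfne]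
          _ = (f ω + ((n : ℝ≥0∞) + 1)⁻¹) * (f ω)⁻¹ := (add_mul _ _ _).symm
          _ ≤ r ω * (f ω)⁻¹ := by gcongr
    -- the e-variable on S = B n
    have hEV := evar_aux Pfam hprob μ hac f hf hdom (hBmeas n)
    have hint := hPle _ hEV
    rw [← lintegral_rnDeriv_mul hPμ hEV.1.aemeasurable] at hint
    have hlower : c ≤ ∫⁻ ω, r ω * (B n).indicator (fun ω => (μ (B n))⁻¹ * (f ω)⁻¹) ω ∂μ := by
      have : ∫⁻ ω in B n, (μ (B n))⁻¹ * c ∂μ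
          ≤ ∫⁻ ω in B n, r ω * ((μ (B n))⁻¹ * (f ω)⁻¹) ∂μ := by
        refine setLIntegral_mono (hrm.mul (Measurable.const_mul hf.inv _)) fun ω hω => ?_
        calc (μ (B n))⁻¹ * c ≤ (μ (B n))⁻¹ * (r ω * (f ω)⁻¹) := by gcongr; exact hlow ω hω
          _ = r ω * ((μ (B n))⁻¹ * (f ω)⁻¹) := by ring
      rw [setLIntegral_const] at this
      have hμfin : μ (B n) ≠ ⊤ := (measure_lt_top μ _).ne
      rw [mul_assoc, mul_comm c, ← mul_assoc, ENNReal.inv_mul_cancel h0 hμfin, one_mul] at this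
      refine this.trans (le_of_eq ?_)
      rw [← lintegral_indicator (hBmeas n) _]
      congr 1
      ext ω
      by_cases hω : ω ∈ B n <;> simp [hω]
    have : c ≤ 1 := hlower.trans hint
    have hc1 : 1 < c := by
      rw [hc]
      have hne0 : ((n : ℝ≥0∞) + 1)⁻¹ * ((n : ℝ≥0∞) + 1)⁻¹ ≠ 0 := by
        refine mul_ne_zero ?_ ?_ <;>
        · simp [ENNReal.inv_ne_zero, ENNReal.add_ne_top, ENNReal.natCast_ne_top]
      exact ENNReal.lt_add_right one_ne_top hne0
    exact absurd this (not_le.mpr hc1)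
  -- conclusion: a.e. r ≤ f
  have hsub : {ω | ¬ r ω ≤ f ω} ⊆ ⋃ n, B n := by
    intro ω hω
    rw [mem_setOf_eq, not_le] at hω
    have hfne : f ω ≠ ⊤ := fun h => by simp [h] at hω
    obtain ⟨n₁, hn₁⟩ := ENNReal.exists_nat_gt hfne
    have hδ : r ω - f ω ≠ 0 := by
      rw [← pos_iff_ne_zero]
      exact tsub_pos_of_lt hω
    obtain ⟨n₂, hn₂⟩ := ENNReal.exists_inv_nat_lt hδ
    set N := max n₁ n₂ with hN
    refine mem_iUnion.mpr ⟨N, ?_, ?_⟩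
    · calc f ω ≤ n₁ := hn₁.le
        _ ≤ (N : ℝ≥0∞) := by exact_mod_cast le_max_left n₁ n₂
        _ ≤ (N : ℝ≥0∞) + 1 := le_self_add
    · have h1 : ((N : ℝ≥0∞) + 1)⁻¹ ≤ ((n₂ : ℝ≥0∞))⁻¹ := by
        refine ENNReal.inv_le_inv.mpr ?_
        calc (n₂ : ℝ≥0∞) ≤ (N : ℝ≥0∞) := by exact_mod_cast le_max_right n₁ n₂
          _ ≤ (N : ℝ≥0∞) + 1 := le_self_add
      calc f ω + ((N : ℝ≥0∞) + 1)⁻¹ ≤ f ω + ((n₂ : ℝ≥0∞))⁻¹ := by gcongr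
        _ ≤ f ω + (r ω - f ω) := by gcongr
        _ = r ω := add_tsub_cancel_of_le hω.le
  exact ae_iff.mpr (measure_mono_null hsub (measure_iUnion_null_iff.mpr hB0))
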